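/- For F̂' > 0 and d̂ > 0, define μ₁(λ) = −1 + F̂'·λ²/(3(1 + d̂λ²)) − λ²/3 for λ ≥ 0, assuming F̂' > 1. Then μ₁ attains its maximum over λ ≥ 0 at λ² = (√F̂' − 1)/d̂, and sup_{λ ≥ 0} μ₁(λ) > 0 if and only if F̂' > (1 + √(3d̂))². -/

import Mathlib

theorem stmt_12 (F d : ℝ) (hF : 0 < F) (hd : 0 < d) (hF1 : 1 < F)
    (μ₁ : ℝ → ℝ)
    (hμ : μ₁ = fun lam : ℝ => -1 + F * lam ^ 2 / (3 * (1 + d * lam ^ 2)) - lam ^ 2 / 3)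
    (lamstar : ℝ) (hstar : lamstar = Real.sqrt ((Real.sqrt F - 1) / d)) :
    (∀ lam : ℝ, 0 ≤ lam → μ₁ lam ≤ μ₁ lamstar) ∧
    (0 < μ₁ lamstar ↔ F > (1 + Real.sqrt (3 * d)) ^ 2) := by
  subst hμ hstar
  set s := Real.sqrt F with hs
  have hs2 : s ^ 2 = F := Real.sq_sqrt hF.le
  have hs1 : 1 < s := by
    have : (1:ℝ) < Real.sqrt F := by
      rw [show (1:ℝ) = Real.sqrt 1 by simp]
      exact Real.sqrt_lt_sqrt (by norm_num) hF1
    exact this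
  have hxnn : 0 ≤ (s - 1) / d := div_nonneg (by linarith) hd.le
  have hl2 : (Real.sqrt ((s - 1) / d)) ^ 2 = (s - 1) / d := Real.sq_sqrt hxnn
  have hd' : d ≠ 0 := ne_of_gt hd
  have hs0 : s ≠ 0 := by linarith
  have hval : -1 + F * (Real.sqrt ((s - 1) / d)) ^ 2 /
      (3 * (1 + d * (Real.sqrt ((s - 1) / d)) ^ 2)) - (Real.sqrt ((s - 1) / d)) ^ 2 / 3
      = -1 + (s - 1) ^ 2 / (3 * d) := by
    rw [hl2]
    have h1 : 1 + d * ((s - 1) / d) = s := by field_simp; ring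
    rw [h1, ← hs2]
    field_simp
    ring
  have key : ∀ x : ℝ, 0 ≤ x →
      -1 + F * x / (3 * (1 + d * x)) - x / 3 ≤ -1 + (s - 1) ^ 2 / (3 * d) := by
    intro x hx
    have ht : (0:ℝ) < 1 + d * x := by positivity
    have h : F * x / (3 * (1 + d * x)) - x / 3 ≤ (s - 1) ^ 2 / (3 * d) := by
      rw [div_sub_div _ _ (by positivity : (3 * (1 + d * x)) ≠ 0) (by norm_num : (3:ℝ) ≠ 0),
        div_le_div_iff₀ (by positivity) (by positivity), ← hs2]
      nlinarith [sq_nonneg (1 + d * x - s), mul_pos hd ht]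
    linarith
  constructor
  · intro lam _
    simp only [hval]
    exact key (lam ^ 2) (sq_nonneg lam)
  · simp only [hval]
    set r := Real.sqrt (3 * d) with hr
    have hr2 : r ^ 2 = 3 * d := Real.sq_sqrt (by positivity)
    have hr0 : 0 ≤ r := Real.sqrt_nonneg _
    constructor
    · intro h
      have h1 : (1:ℝ) < (s - 1) ^ 2 / (3 * d) := by linarith
      rw [lt_div_iff₀ (by positivity)] at h1
      have h2 : r < s - 1 := by
        have := Real.sqrt_lt_sqrt (by positivity : (0:ℝ) ≤ 3 * d) (by linarith : 3 * d < (s - 1) ^ 2)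
        rwa [Real.sqrt_sq (by linarith : (0:ℝ) ≤ s - 1)] at this
      have h3 : (1 + r) ^ 2 < s ^ 2 := by nlinarith
      rw [hs2] at h3
      exact h3
    · intro h
      rw [← hs2] at h
      have h2 : 1 + r < s := by
        have := Real.sqrt_lt_sqrt (by positivity : (0:ℝ) ≤ (1 + r) ^ 2) h
        rwa [Real.sqrt_sq (by positivity : (0:ℝ) ≤ 1 + r), Real.sqrt_sq (by positivity)] at this
      have h1 : 3 * d < (s - 1) ^ 2 := by nlinarith
      have : (1:ℝ) < (s - 1) ^ 2 / (3 * d) := (one_lt_div (by positivity)).mpr h1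
      linarith
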